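/- Let B be a graph of odd-girth 2k+1 that bounds the class of planar graphs of odd-girth at least 2k+1 (i.e., every planar graph of odd-girth ≥ 2k+1 admits a homomorphism to B). Assuming there exists a planar graph G of odd-girth 2k+1 whose (2k-1)-st walk-power contains a clique of size 2^{2k}, then |V(B)| ≥ 2^{2k}. -/

import Mathlib

/-- `G` is a minor of `H`: there is a family of nonempty, pairwise disjoint,
connected branch sets in `H`, one per vertex of `G`, with edges of `G`
realized by edges of `H` between the corresponding branch sets. -/
def IsMinor {V W : Type*} (G : SimpleGraph V) (H : SimpleGraph W) : Prop :=
  ∃ f : V → Set W,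
    (∀ v, (f v).Nonempty) ∧
    (∀ v, (SimpleGraph.induce (f v) H).Connected) ∧
    (∀ u v, u ≠ v → Disjoint (f u) (f v)) ∧
    (∀ u v, G.Adj u v → ∃ x ∈ f u, ∃ y ∈ f v, H.Adj x y)

/-- Planarity via Wagner's theorem: no `K₅` minor and no `K₃,₃` minor. -/
def IsPlanar {W : Type*} (H : SimpleGraph W) : Prop :=
  ¬ IsMinor (⊤ : SimpleGraph (Fin 5)) H ∧
  ¬ IsMinor (completeBipartiteGraph (Fin 3) (Fin 3)) H

/-- In a path from `x` to `v`, if the edge `{x, v}` occurs, the path has length 1. -/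
lemma aux_path_edge {V : Type*} {G : SimpleGraph V} {x v : V} (q : G.Walk x v)
    (hq : q.IsPath) (he : s(x, v) ∈ q.edges) : q.length = 1 := by
  cases q with
  | nil => simp at he
  | cons h r =>
    rw [SimpleGraph.Walk.edges_cons, List.mem_cons] at he
    rw [SimpleGraph.Walk.cons_isPath_iff] at hq
    rcases he with he | he
    · rw [Sym2.eq_iff] at he
      rcases he with ⟨-, hv⟩ | ⟨hxy, -⟩
      · subst hv
        have : r = SimpleGraph.Walk.nil := SimpleGraph.Walk.isPath_iff_eq_nil.mp hq.1
        simp [this]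
      · exact absurd hxy h.ne
    · exact absurd (r.fst_mem_support_of_mem_edges he) hq.2

/-- Every closed walk of odd length contains an odd cycle of length at most
that of the walk. -/
lemma odd_closed_walk_exists_cycle {V : Type*} {G : SimpleGraph V} :
    ∀ (n : ℕ) (v : V) (w : G.Walk v v), w.length = n → Odd n →
      ∃ (u : V) (c : G.Walk u u), c.IsCycle ∧ Odd c.length ∧ c.length ≤ n := by
  intro n
  induction n using Nat.strong_induction_on with
  | _ n ih =>
  intro v w hlen hodd
  classical
  cases w with
  | nil =>
    exfalso
    rcases hodd with ⟨m, hm⟩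
    simp only [SimpleGraph.Walk.length_nil] at hlen
    omega
  | cons h q =>
    rename_i x
    rw [SimpleGraph.Walk.length_cons] at hlen
    by_cases hnd : q.support.Nodup
    · have hq : q.IsPath := (SimpleGraph.Walk.isPath_def q).mpr hnd
      by_cases he : s(x, v) ∈ q.edges
      · exfalso
        have h1 := aux_path_edge q hq he
        rcases hodd with ⟨m, hm⟩
        omega
      · refine ⟨v, SimpleGraph.Walk.cons h q, ?_, ?_, ?_⟩
        · rw [SimpleGraph.Walk.cons_isCycle_iff]
          exact ⟨hq, fun hc => he (by rwa [Sym2.eq_swap] at hc)⟩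
        · rw [SimpleGraph.Walk.length_cons, hlen]; exact hodd
        · rw [SimpleGraph.Walk.length_cons, hlen]
    · obtain ⟨u, hu⟩ := List.exists_duplicate_iff_not_nodup.mpr hnd
      have hcount : 2 ≤ q.support.count u := List.duplicate_iff_two_le_count.mp hu
      have humem : u ∈ q.support := by
        rw [← List.count_pos_iff]; omega
      have hspec := q.take_spec humem
      have hc1 : (q.takeUntil u humem).support.count u = 1 :=
        q.count_support_takeUntil_eq_one humem
      have hsupp : q.support
          = (q.takeUntil u humem).support ++ (q.dropUntil u humem).support.tail := by
        conv_lhs => rw [← hspec]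
        exact SimpleGraph.Walk.support_append _ _
      have hu2 : u ∈ (q.dropUntil u humem).support.tail := by
        by_contra hne
        have h0 := List.count_eq_zero_of_not_mem hne
        rw [hsupp, List.count_append, hc1, h0] at hcount
        omega
      have hlen2 : (q.takeUntil u humem).length + (q.dropUntil u humem).length = q.length := by
        conv_rhs => rw [← hspec]
        exact (SimpleGraph.Walk.length_append _ _).symm
      have hnn : ¬ (q.dropUntil u humem).Nil := by
        intro hnil
        rw [SimpleGraph.Walk.nil_iff_support_eq] at hnil
        rw [hnil] at hu2
        simp at hu2
      obtain ⟨y, h2, r, hq2⟩ := SimpleGraph.Walk.not_nil_iff.mp hnn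
      rw [hq2] at hu2 hlen2
      rw [SimpleGraph.Walk.support_cons, List.tail_cons] at hu2
      rw [SimpleGraph.Walk.length_cons] at hlen2
      have hrspec := r.take_spec hu2
      have hrlen : (r.takeUntil u hu2).length + (r.dropUntil u hu2).length = r.length := by
        conv_rhs => rw [← hrspec]
        exact (SimpleGraph.Walk.length_append _ _).symm
      -- the inner closed walk at u
      set mid : G.Walk u u := SimpleGraph.Walk.cons h2 (r.takeUntil u hu2) with hmid
      -- the outer closed walk at v
      set outer : G.Walk v v :=
        SimpleGraph.Walk.cons h ((q.takeUntil u humem).append (r.dropUntil u hu2)) with houter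
      have hmidlen : mid.length = (r.takeUntil u hu2).length + 1 := by
        rw [hmid, SimpleGraph.Walk.length_cons]
      have houterlen : outer.length
          = (q.takeUntil u humem).length + (r.dropUntil u hu2).length + 1 := by
        rw [houter, SimpleGraph.Walk.length_cons, SimpleGraph.Walk.length_append]
      have hq2len : r.length + 1 = q.length - (q.takeUntil u humem).length := by omega
      have hsum : mid.length + outer.length = n := by
        have : (SimpleGraph.Walk.cons h2 r : G.Walk u v).length = r.length + 1 :=
          SimpleGraph.Walk.length_cons _ _
        omega
      rcases Nat.even_or_odd mid.length with hmide | hmido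
      · -- outer is odd and shorter
        have houtero : Odd outer.length := by
          rcases hodd with ⟨m, hm⟩; rcases hmide with ⟨m2, hm2⟩
          refine ⟨m - m2, by omega⟩
        have hlt : outer.length < n := by
          have : 1 ≤ mid.length := by omega
          omega
        obtain ⟨u', c, hc, hco, hcl⟩ := ih outer.length hlt v outer rfl houtero
        exact ⟨u', c, hc, hco, by omega⟩
      · have hlt : mid.length < n := by
          have : 1 ≤ outer.length := by omega
          omega
        obtain ⟨u', c, hc, hco, hcl⟩ := ih mid.length hlt u mid rfl hmido
        exact ⟨u', c, hc, hco, by omega⟩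

/-- If `B` has odd-girth `2k+1` and bounds the class of planar graphs of odd-girth
at least `2k+1`, and there is a planar graph `G` of odd-girth `2k+1` whose
`(2k-1)`-st walk-power contains a clique of size `2^{2k}`, then `B` has at least
`2^{2k}` vertices. -/
theorem bound_card_lower {VB : Type*} [Fintype VB] (B : SimpleGraph VB)
    (k : ℕ) (hk : 1 ≤ k)
    (hBodd : (∃ (v : VB) (c : B.Walk v v), c.IsCycle ∧ Odd c.length ∧ c.length = 2 * k + 1) ∧
      ∀ (v : VB) (c : B.Walk v v), c.IsCycle → Odd c.length → 2 * k + 1 ≤ c.length)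
    (hbound : ∀ (VG : Type) [Fintype VG] (G : SimpleGraph VG), IsPlanar G →
      (∀ (v : VG) (c : G.Walk v v), c.IsCycle → Odd c.length → 2 * k + 1 ≤ c.length) →
      Nonempty (G →g B))
    (hexists : ∃ (VG : Type) (_ : Fintype VG) (G : SimpleGraph VG) (s : Finset VG),
      IsPlanar G ∧
      (∃ (v : VG) (c : G.Walk v v), c.IsCycle ∧ Odd c.length ∧ c.length = 2 * k + 1) ∧
      (∀ (v : VG) (c : G.Walk v v), c.IsCycle → Odd c.length → 2 * k + 1 ≤ c.length) ∧
      s.card = 2 ^ (2 * k) ∧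
      (∀ x ∈ s, ∀ y ∈ s, x ≠ y → ∃ w : G.Walk x y, w.length = 2 * k - 1)) :
    2 ^ (2 * k) ≤ Fintype.card VB := by
  classical
  obtain ⟨VG, instG, G, s, hplanar, -, hgirth, hcard, hclique⟩ := hexists
  haveI := instG
  obtain ⟨f⟩ := hbound VG G hplanar hgirth
  have hinj : Set.InjOn (fun x => f x) ↑s := by
    intro x hx y hy hfe
    by_contra hne
    obtain ⟨w, hw⟩ := hclique x hx y hy hne
    have hfe' : f y = f x := hfe.symm
    let w' : B.Walk (f x) (f x) := (w.map f).copy rfl hfe'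
    have hlen' : w'.length = 2 * k - 1 := by
      simp [w', hw]
    obtain ⟨u, c, hc, hco, hcl⟩ :=
      odd_closed_walk_exists_cycle (2 * k - 1) (f x) w' hlen' ⟨k - 1, by omega⟩
    have := hBodd.2 u c hc hco
    omega
  calc 2 ^ (2 * k) = s.card := hcard.symm
    _ ≤ Finset.univ.card :=
        Finset.card_le_card_of_injOn (fun x => f x) (fun _ _ => Finset.mem_univ _) hinj
    _ = Fintype.card VB := Finset.card_univ
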